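/- Let D be a central division algebra of prime degree p over F (char F ∤ p, ρ ∈ F a primitive p-th root of unity) and let x, z ∈ D be p-central with z = z_i + z_j (exactly two eigencomponents with respect to conjugation by x, indices i ≠ j) and x = x_m + x_n (exactly two eigencomponents with respect to conjugation by z). Then {m, n} = {-i, -j} mod p, and moreover x_i x_j = ρ^{j-i} x_j x_i and z_{-i} z_{-j} = ρ^{i-j} z_{-j} z_{-i}. -/
import Mathlib

section WeightAux

variable {F D : Type*} [Field F] [DivisionRing D] [Algebra F D]

private lemma wt_smul_cancel {c : F} {d : D} (hc : c ≠ 0) (h : c • d = 0) : d = 0 := by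
  have h2 := congrArg (fun w => c⁻¹ • w) h
  simpa [smul_smul, inv_mul_cancel₀ hc] using h2

private lemma wt_smul_inj {c : F} (hc : c ≠ 0) {a b : D} (h : c • a = c • b) : a = b := by
  have h2 := congrArg (fun w => c⁻¹ • w) h
  simpa [smul_smul, inv_mul_cancel₀ hc] using h2

private lemma wt_eig_mul {x u v : D} {a b : F} (hu : u * x = a • (x * u))
    (hv : v * x = b • (x * v)) : (u * v) * x = (a * b) • (x * (u * v)) := by
  calc (u*v)*x = u*(v*x) := mul_assoc u v x
  _ = b • (u*(x*v)) := by rw [hv, mul_smul_comm]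
  _ = b • ((u*x)*v) := by rw [mul_assoc]
  _ = b • ((a • (x*u))*v) := by rw [hu]
  _ = (a*b) • (x*(u*v)) := by rw [smul_mul_assoc, smul_smul, mul_assoc, mul_comm b a]

private lemma wt_eig_lmul {x v : D} {a : F} (hv : v * x = a • (x * v)) :
    (x * v) * x = a • (x * (x * v)) := by
  rw [mul_assoc, hv, mul_smul_comm]

private lemma wt_eig_smul (c : F) {x v : D} {a : F} (hv : v * x = a • (x * v)) :
    (c • v) * x = a • (x * (c • v)) := by
  rw [smul_mul_assoc, hv, mul_smul_comm, smul_smul, smul_smul, mul_comm c a]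

private lemma wt_eig_add {x u v : D} {a : F} (hu : u * x = a • (x * u))
    (hv : v * x = a • (x * v)) : (u + v) * x = a • (x * (u + v)) := by
  rw [add_mul, hu, hv, mul_add, smul_add]

/-- Separation of eigencomponents: if `v1 + v2 + v3 = 0` with `v r` eigenvectors for
(right) twisted commutation with `X`, and the middle eigenvalue differs from the other
two, then `v2 = 0`. -/
private lemma wt_sep_mid (X : D) (hX : X ≠ 0) {l1 l2 l3 : F} {v1 v2 v3 : D}
    (h1 : v1 * X = l1 • (X * v1)) (h2 : v2 * X = l2 • (X * v2))
    (h3 : v3 * X = l3 • (X * v3)) (h21 : l2 ≠ l1) (h23 : l2 ≠ l3)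
    (hsum : v1 + v2 + v3 = 0) : v2 = 0 := by
  have E2 : X*v1 + X*v2 + X*v3 = 0 := by rw [← mul_add, ← mul_add, hsum, mul_zero]
  have E1 : l1 • (X*v1) + l2 • (X*v2) + l3 • (X*v3) = 0 := by
    have h : (v1+v2+v3) * X = 0 := by rw [hsum, zero_mul]
    rw [add_mul, add_mul, h1, h2, h3] at h
    exact h
  have E3 : (l2 - l1) • (X*v2) + (l3 - l1) • (X*v3) = 0 := by
    have key : (l2 - l1) • (X*v2) + (l3 - l1) • (X*v3)
        = (l1 • (X*v1) + l2 • (X*v2) + l3 • (X*v3)) - l1 • (X*v1 + X*v2 + X*v3) := by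
      module
    rw [key, E1, E2, smul_zero, sub_zero]
  have h2' : (X*v2) * X = l2 • (X*(X*v2)) := wt_eig_lmul h2
  have h3' : (X*v3) * X = l3 • (X*(X*v3)) := wt_eig_lmul h3
  have E4 : (l2-l1) • (l2 • (X*(X*v2))) + (l3-l1) • (l3 • (X*(X*v3))) = 0 := by
    have h : ((l2-l1) • (X*v2) + (l3-l1) • (X*v3)) * X = 0 := by rw [E3, zero_mul]
    rw [add_mul, smul_mul_assoc, smul_mul_assoc, h2', h3'] at h
    exact h
  have E5 : (l2-l1) • (X*(X*v2)) + (l3-l1) • (X*(X*v3)) = 0 := by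
    have h : X * ((l2-l1) • (X*v2) + (l3-l1) • (X*v3)) = 0 := by rw [E3, mul_zero]
    rw [mul_add, mul_smul_comm, mul_smul_comm] at h
    exact h
  have E6 : ((l2-l1)*(l2-l3)) • (X*(X*v2)) = 0 := by
    have key : ((l2-l1)*(l2-l3)) • (X*(X*v2))
        = ((l2-l1) • (l2 • (X*(X*v2))) + (l3-l1) • (l3 • (X*(X*v3))))
          - l3 • ((l2-l1) • (X*(X*v2)) + (l3-l1) • (X*(X*v3))) := by
      module
    rw [key, E4, E5, smul_zero, sub_zero]
  have h6 : X*(X*v2) = 0 :=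
    wt_smul_cancel (mul_ne_zero (sub_ne_zero.mpr h21) (sub_ne_zero.mpr h23)) E6
  rcases mul_eq_zero.mp h6 with h | h
  · exact absurd h hX
  rcases mul_eq_zero.mp h with h' | h'
  · exact absurd h' hX
  · exact h'

/-- If `X = u + v` with eigencomponents `u, v` (eigenvalues `cu, cv` whose inverses are
`du, dv`), then `X` satisfies the quadratic operator identity for conjugation by `Z`. -/
private lemma wt_two_comp_identity (Z X u v : D) (cu cv du dv : F)
    (hu : u * Z = cu • (Z * u)) (hv : v * Z = cv • (Z * v))
    (hduu : du * cu = 1) (hdvv : dv * cv = 1) (hX : X = u + v) :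
    Z*(Z*X) - (du + dv) • (Z*(X*Z)) + (du*dv) • (X*(Z*Z)) = 0 := by
  have hzu : Z * u = du • (u * Z) := by rw [hu, smul_smul, hduu, one_smul]
  have hzv : Z * v = dv • (v * Z) := by rw [hv, smul_smul, hdvv, one_smul]
  have h2u : Z*(Z*u) = (du*du) • (u*(Z*Z)) := by
    calc Z*(Z*u) = Z*(du • (u*Z)) := by rw [hzu]
    _ = du • ((Z*u)*Z) := by rw [mul_smul_comm, mul_assoc]
    _ = du • ((du • (u*Z))*Z) := by rw [hzu]
    _ = (du*du) • (u*(Z*Z)) := by rw [smul_mul_assoc, smul_smul, mul_assoc]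
  have h2v : Z*(Z*v) = (dv*dv) • (v*(Z*Z)) := by
    calc Z*(Z*v) = Z*(dv • (v*Z)) := by rw [hzv]
    _ = dv • ((Z*v)*Z) := by rw [mul_smul_comm, mul_assoc]
    _ = dv • ((dv • (v*Z))*Z) := by rw [hzv]
    _ = (dv*dv) • (v*(Z*Z)) := by rw [smul_mul_assoc, smul_smul, mul_assoc]
  have h1u : Z*(u*Z) = du • (u*(Z*Z)) := by
    calc Z*(u*Z) = (Z*u)*Z := by rw [mul_assoc]
    _ = (du • (u*Z))*Z := by rw [hzu]
    _ = du • (u*(Z*Z)) := by rw [smul_mul_assoc, mul_assoc]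
  have h1v : Z*(v*Z) = dv • (v*(Z*Z)) := by
    calc Z*(v*Z) = (Z*v)*Z := by rw [mul_assoc]
    _ = (dv • (v*Z))*Z := by rw [hzv]
    _ = dv • (v*(Z*Z)) := by rw [smul_mul_assoc, mul_assoc]
  rw [hX]
  simp only [mul_add, add_mul]
  rw [h2u, h2v, h1u, h1v]
  module

/-- Expansion of the quadratic operator expression along the decomposition `Z = u + v`. -/
private lemma wt_expand_two (X u v Z : D) (cu cv e1 e2 : F) (hZ : Z = u + v)
    (hu : u * X = cu • (X * u)) (hv : v * X = cv • (X * v)) :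
    Z*(Z*X) - e1 • (Z*(X*Z)) + e2 • (X*(Z*Z)) =
      (cu*cu - e1*cu + e2) • (X*(u*u)) + (cu*cv - e1*cu + e2) • (X*(u*v))
      + (cv*cu - e1*cv + e2) • (X*(v*u)) + (cv*cv - e1*cv + e2) • (X*(v*v)) := by
  have huu : u*(u*X) = (cu*cu) • (X*(u*u)) := by
    calc u*(u*X) = u*(cu • (X*u)) := by rw [hu]
    _ = cu • ((u*X)*u) := by rw [mul_smul_comm, mul_assoc]
    _ = cu • ((cu • (X*u))*u) := by rw [hu]
    _ = (cu*cu) • (X*(u*u)) := by rw [smul_mul_assoc, smul_smul, mul_assoc]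
  have huv : u*(v*X) = (cu*cv) • (X*(u*v)) := by
    calc u*(v*X) = u*(cv • (X*v)) := by rw [hv]
    _ = cv • ((u*X)*v) := by rw [mul_smul_comm, mul_assoc]
    _ = cv • ((cu • (X*u))*v) := by rw [hu]
    _ = (cu*cv) • (X*(u*v)) := by rw [smul_mul_assoc, smul_smul, mul_assoc, mul_comm cv cu]
  have hvu : v*(u*X) = (cv*cu) • (X*(v*u)) := by
    calc v*(u*X) = v*(cu • (X*u)) := by rw [hu]
    _ = cu • ((v*X)*u) := by rw [mul_smul_comm, mul_assoc]
    _ = cu • ((cv • (X*v))*u) := by rw [hv]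
    _ = (cv*cu) • (X*(v*u)) := by rw [smul_mul_assoc, smul_smul, mul_assoc, mul_comm cu cv]
  have hvv : v*(v*X) = (cv*cv) • (X*(v*v)) := by
    calc v*(v*X) = v*(cv • (X*v)) := by rw [hv]
    _ = cv • ((v*X)*v) := by rw [mul_smul_comm, mul_assoc]
    _ = cv • ((cv • (X*v))*v) := by rw [hv]
    _ = (cv*cv) • (X*(v*v)) := by rw [smul_mul_assoc, smul_smul, mul_assoc]
  have muu : u*(X*u) = cu • (X*(u*u)) := by
    calc u*(X*u) = (u*X)*u := by rw [mul_assoc]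
    _ = (cu • (X*u))*u := by rw [hu]
    _ = cu • (X*(u*u)) := by rw [smul_mul_assoc, mul_assoc]
  have muv : u*(X*v) = cu • (X*(u*v)) := by
    calc u*(X*v) = (u*X)*v := by rw [mul_assoc]
    _ = (cu • (X*u))*v := by rw [hu]
    _ = cu • (X*(u*v)) := by rw [smul_mul_assoc, mul_assoc]
  have mvu : v*(X*u) = cv • (X*(v*u)) := by
    calc v*(X*u) = (v*X)*u := by rw [mul_assoc]
    _ = (cv • (X*v))*u := by rw [hv]
    _ = cv • (X*(v*u)) := by rw [smul_mul_assoc, mul_assoc]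
  have mvv : v*(X*v) = cv • (X*(v*v)) := by
    calc v*(X*v) = (v*X)*v := by rw [mul_assoc]
    _ = (cv • (X*v))*v := by rw [hv]
    _ = cv • (X*(v*v)) := by rw [smul_mul_assoc, mul_assoc]
  rw [hZ]
  simp only [mul_add, add_mul]
  rw [huu, huv, hvu, hvv, muu, muv, mvu, mvv]
  module

/-- Key step: a quadratic operator identity whose roots are the eigenvalues of the two
components forces the two components to `ρ`-commute. -/
private lemma wt_key_commute (X Z u v : D) (ca cb da : F)
    (hca : ca ≠ 0) (hab : ca ≠ cb) (hdaa : da * ca = 1)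
    (hZ : Z = u + v) (hu : u * X = ca • (X * u)) (hv : v * X = cb • (X * v))
    (hX : X ≠ 0)
    (hid : Z*(Z*X) - (ca + cb) • (Z*(X*Z)) + (ca*cb) • (X*(Z*Z)) = 0) :
    u * v = (da * cb) • (v * u) := by
  have S := (wt_expand_two X u v Z ca cb (ca+cb) (ca*cb) hZ hu hv).symm.trans hid
  have key : (ca*(cb - ca)) • (X*(u*v)) - (cb*(cb - ca)) • (X*(v*u))
      = (ca*ca - (ca+cb)*ca + ca*cb) • (X*(u*u)) + (ca*cb - (ca+cb)*ca + ca*cb) • (X*(u*v))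
        + (cb*ca - (ca+cb)*cb + ca*cb) • (X*(v*u))
        + (cb*cb - (ca+cb)*cb + ca*cb) • (X*(v*v)) := by
    module
  have S2 : (ca*(cb - ca)) • (X*(u*v)) = (cb*(cb - ca)) • (X*(v*u)) :=
    sub_eq_zero.mp (key.trans S)
  have S3 : X*((ca*(cb - ca)) • (u*v)) = X*((cb*(cb - ca)) • (v*u)) := by
    rw [mul_smul_comm, mul_smul_comm]; exact S2
  have S4 : (ca*(cb - ca)) • (u*v) = (cb*(cb - ca)) • (v*u) := mul_left_cancel₀ hX S3
  have hs : cb - ca ≠ 0 := sub_ne_zero.mpr (Ne.symm hab)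
  have hfin : (ca*(cb - ca)) • ((da*cb) • (v*u)) = (cb*(cb - ca)) • (v*u) := by
    rw [smul_smul]
    congr 1
    linear_combination (cb - ca) * cb * hdaa
  exact wt_smul_inj (mul_ne_zero hca hs) (S4.trans hfin.symm)

private lemma wt_zmod2_pairs : ∀ a b c d : ZMod 2, a ≠ b → c ≠ d →
    (c = -a ∧ d = -b) ∨ (c = -b ∧ d = -a) := by decide

end WeightAux

/-- Weight `(2,2)` edges: if `z = z_i + z_j` (eigencomponents for conjugation by `x`)
and `x = x_m + x_n` (eigencomponents for conjugation by `z`), then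
`{m, n} = {-i, -j}` modulo `p`, and the pairs of eigencomponents `ρ`-commute:
`z_i z_j = ρ^{j-i} z_j z_i` and `x_m x_n = ρ^{n-m} x_n x_m`. -/
theorem weight_two_two
    {F D : Type*} [Field F] [DivisionRing D] [Algebra F D]
    (p : ℕ) (hp : p.Prime) (hpF : (p : F) ≠ 0)
    (ρ : F) (hρ : IsPrimitiveRoot ρ p)
    (hcentral : ∀ a : D, (∀ b : D, a * b = b * a) → ∃ c : F, a = algebraMap F D c)
    (hdim : Module.finrank F D = p ^ 2)
    (x z : D) (α β : F) (hα : α ≠ 0) (hβ : β ≠ 0)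
    (hxp : x ^ p = algebraMap F D α) (hzp : z ^ p = algebraMap F D β)
    (hxnc : ∀ s : F, x ≠ algebraMap F D s) (hznc : ∀ s : F, z ≠ algebraMap F D s)
    (i j m n : ZMod p) (hij : i ≠ j) (hmn : m ≠ n)
    (zi zj xm xn : D)
    (hzi0 : zi ≠ 0) (hzj0 : zj ≠ 0) (hxm0 : xm ≠ 0) (hxn0 : xn ≠ 0)
    (hz : z = zi + zj) (hx : x = xm + xn)
    (hziX : zi * x = ρ ^ i.val • (x * zi)) (hzjX : zj * x = ρ ^ j.val • (x * zj))
    (hxmZ : xm * z = ρ ^ m.val • (z * xm)) (hxnZ : xn * z = ρ ^ n.val • (z * xn)) :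
    ({m, n} : Set (ZMod p)) = {-i, -j} ∧
    zi * zj = ρ ^ (j - i).val • (zj * zi) ∧
    xm * xn = ρ ^ (n - m).val • (xn * xm) := by
  haveI : NeZero p := ⟨hp.ne_zero⟩
  haveI : Fact p.Prime := ⟨hp⟩
  have hρp : ρ ^ p = 1 := hρ.pow_eq_one
  have hρ0 : ρ ≠ 0 := by
    intro h
    rw [h, zero_pow hp.ne_zero] at hρp
    exact zero_ne_one hρp
  have hmod : ∀ u : ℕ, ρ ^ u = ρ ^ (u % p) := by
    intro u
    conv_lhs => rw [← Nat.mod_add_div u p]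
    rw [pow_add, pow_mul, hρp, one_pow, mul_one]
  have P : ∀ a b : ZMod p, ρ ^ a.val * ρ ^ b.val = ρ ^ (a + b).val := by
    intro a b
    rw [← pow_add, ZMod.val_add, ← hmod]
  have hinj : ∀ a b : ZMod p, ρ ^ a.val = ρ ^ b.val → a = b := by
    intro a b h
    exact ZMod.val_injective p (hρ.pow_inj (ZMod.val_lt a) (ZMod.val_lt b) h)
  have hne' : ∀ a b : ZMod p, a ≠ b → ρ ^ a.val ≠ ρ ^ b.val :=
    fun a b hab h => hab (hinj a b h)
  have hd1 : ∀ a : ZMod p, ρ ^ a.val * ρ ^ (-a).val = 1 := by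
    intro a; rw [P, add_neg_cancel, ZMod.val_zero, pow_zero]
  have hd2 : ∀ a : ZMod p, ρ ^ (-a).val * ρ ^ a.val = 1 := by
    intro a; rw [P, neg_add_cancel, ZMod.val_zero, pow_zero]
  have hx0 : x ≠ 0 := fun h => hxnc 0 (by rw [h, map_zero])
  have hz0 : z ≠ 0 := fun h => hznc 0 (by rw [h, map_zero])
  -- quadratic operator identity coming from the decomposition x = xm + xn
  have I1 : z*(z*x) - (ρ ^ (-m).val + ρ ^ (-n).val) • (z*(x*z))
      + (ρ ^ (-m).val * ρ ^ (-n).val) • (x*(z*z)) = 0 :=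
    wt_two_comp_identity z x xm xn (ρ ^ m.val) (ρ ^ n.val) (ρ ^ (-m).val) (ρ ^ (-n).val)
      hxmZ hxnZ (hd2 m) (hd2 n) hx
  -- expand it along the decomposition z = zi + zj
  have S4 := (wt_expand_two x zi zj z (ρ ^ i.val) (ρ ^ j.val)
      (ρ ^ (-m).val + ρ ^ (-n).val) (ρ ^ (-m).val * ρ ^ (-n).val) hz hziX hzjX).symm.trans I1
  set cA := ρ ^ i.val * ρ ^ i.val - (ρ ^ (-m).val + ρ ^ (-n).val) * ρ ^ i.val
      + ρ ^ (-m).val * ρ ^ (-n).val with hcA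
  set cB := ρ ^ i.val * ρ ^ j.val - (ρ ^ (-m).val + ρ ^ (-n).val) * ρ ^ i.val
      + ρ ^ (-m).val * ρ ^ (-n).val with hcB
  set cC := ρ ^ j.val * ρ ^ i.val - (ρ ^ (-m).val + ρ ^ (-n).val) * ρ ^ j.val
      + ρ ^ (-m).val * ρ ^ (-n).val with hcC
  set cD := ρ ^ j.val * ρ ^ j.val - (ρ ^ (-m).val + ρ ^ (-n).val) * ρ ^ j.val
      + ρ ^ (-m).val * ρ ^ (-n).val with hcD
  clear_value cA cB cC cD
  -- the index sets match up (as a disjunction)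
  have hOR : (m = -i ∧ n = -j) ∨ (m = -j ∧ n = -i) := by
    by_cases hp2 : p = 2
    · subst hp2
      exact wt_zmod2_pairs i j m n hij hmn
    · have htwo : (2 : ZMod p) ≠ 0 := by
        intro h
        have h2 : ((2 : ℕ) : ZMod p) = 0 := by exact_mod_cast h
        rw [ZMod.natCast_eq_zero_iff] at h2
        exact hp2 ((Nat.prime_dvd_prime_iff_eq hp Nat.prime_two).mp h2)
      have ea1 : (x*(zi*zi))*x = (ρ ^ i.val * ρ ^ i.val) • (x*(x*(zi*zi))) :=
        wt_eig_lmul (wt_eig_mul hziX hziX)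
      have ea2 : (x*(zi*zj))*x = (ρ ^ i.val * ρ ^ j.val) • (x*(x*(zi*zj))) :=
        wt_eig_lmul (wt_eig_mul hziX hzjX)
      have ea3 : (x*(zj*zi))*x = (ρ ^ i.val * ρ ^ j.val) • (x*(x*(zj*zi))) := by
        have h := wt_eig_lmul (wt_eig_mul hzjX hziX)
        rwa [mul_comm (ρ ^ j.val) (ρ ^ i.val)] at h
      have ea4 : (x*(zj*zj))*x = (ρ ^ j.val * ρ ^ j.val) • (x*(x*(zj*zj))) :=
        wt_eig_lmul (wt_eig_mul hzjX hzjX)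
      have l12 : (ρ ^ i.val * ρ ^ i.val : F) ≠ ρ ^ i.val * ρ ^ j.val := by
        rw [P, P]; exact hne' _ _ (fun h => hij (add_left_cancel h))
      have l42 : (ρ ^ j.val * ρ ^ j.val : F) ≠ ρ ^ i.val * ρ ^ j.val := by
        rw [P, P]; exact hne' _ _ (fun h => hij ((add_right_cancel h).symm))
      have l14 : (ρ ^ i.val * ρ ^ i.val : F) ≠ ρ ^ j.val * ρ ^ j.val := by
        rw [P, P]
        refine hne' _ _ (fun h => hij ?_)
        have h2 : 2*i = 2*j := by rw [two_mul, two_mul]; exact h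
        exact mul_left_cancel₀ htwo h2
      have hsumA : (cB • (x*(zi*zj)) + cC • (x*(zj*zi))) + cA • (x*(zi*zi))
          + cD • (x*(zj*zj)) = 0 := by
        calc (cB • (x*(zi*zj)) + cC • (x*(zj*zi))) + cA • (x*(zi*zi)) + cD • (x*(zj*zj))
            = cA • (x*(zi*zi)) + cB • (x*(zi*zj)) + cC • (x*(zj*zi)) + cD • (x*(zj*zj)) := by
              abel
        _ = 0 := S4
      have hAt : cA • (x*(zi*zi)) = 0 :=
        wt_sep_mid x hx0 (wt_eig_add (wt_eig_smul cB ea2) (wt_eig_smul cC ea3))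
          (wt_eig_smul cA ea1) (wt_eig_smul cD ea4) l12 l14 hsumA
      have hsumD : (cB • (x*(zi*zj)) + cC • (x*(zj*zi))) + cD • (x*(zj*zj))
          + cA • (x*(zi*zi)) = 0 := by
        calc (cB • (x*(zi*zj)) + cC • (x*(zj*zi))) + cD • (x*(zj*zj)) + cA • (x*(zi*zi))
            = cA • (x*(zi*zi)) + cB • (x*(zi*zj)) + cC • (x*(zj*zi)) + cD • (x*(zj*zj)) := by
              abel
        _ = 0 := S4
      have hDt : cD • (x*(zj*zj)) = 0 :=
        wt_sep_mid x hx0 (wt_eig_add (wt_eig_smul cB ea2) (wt_eig_smul cC ea3))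
          (wt_eig_smul cD ea4) (wt_eig_smul cA ea1) l42 l14.symm hsumD
      have hA0 : cA = 0 := by
        by_contra hc
        exact (mul_ne_zero hx0 (mul_ne_zero hzi0 hzi0)) (wt_smul_cancel hc hAt)
      have hD0 : cD = 0 := by
        by_contra hc
        exact (mul_ne_zero hx0 (mul_ne_zero hzj0 hzj0)) (wt_smul_cancel hc hDt)
      have hi' : i = -m ∨ i = -n := by
        have hfac : (ρ ^ i.val - ρ ^ (-m).val) * (ρ ^ i.val - ρ ^ (-n).val) = 0 := by
          rw [hcA] at hA0
          linear_combination hA0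
        rcases mul_eq_zero.mp hfac with h | h
        · exact Or.inl (hinj _ _ (sub_eq_zero.mp h))
        · exact Or.inr (hinj _ _ (sub_eq_zero.mp h))
      have hj' : j = -m ∨ j = -n := by
        have hfac : (ρ ^ j.val - ρ ^ (-m).val) * (ρ ^ j.val - ρ ^ (-n).val) = 0 := by
          rw [hcD] at hD0
          linear_combination hD0
        rcases mul_eq_zero.mp hfac with h | h
        · exact Or.inl (hinj _ _ (sub_eq_zero.mp h))
        · exact Or.inr (hinj _ _ (sub_eq_zero.mp h))
      rcases hi' with h1 | h1 <;> rcases hj' with h2 | h2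
      · exact absurd (h1.trans h2.symm) hij
      · exact Or.inl ⟨by rw [h1, neg_neg], by rw [h2, neg_neg]⟩
      · exact Or.inr ⟨by rw [h2, neg_neg], by rw [h1, neg_neg]⟩
      · exact absurd (h1.trans h2.symm) hij
  clear S4 I1 hcA hcB hcC hcD
  rcases hOR with ⟨h1, h2⟩ | ⟨h1, h2⟩
  · subst h1; subst h2
    refine ⟨rfl, ?_, ?_⟩
    · have hid1 : z*(z*x) - (ρ ^ i.val + ρ ^ j.val) • (z*(x*z))
          + (ρ ^ i.val * ρ ^ j.val) • (x*(z*z)) = 0 :=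
        wt_two_comp_identity z x xm xn (ρ ^ (-i).val) (ρ ^ (-j).val) (ρ ^ i.val) (ρ ^ j.val)
          hxmZ hxnZ (hd1 i) (hd1 j) hx
      have h := wt_key_commute x z zi zj (ρ ^ i.val) (ρ ^ j.val) (ρ ^ (-i).val)
        (pow_ne_zero _ hρ0) (hne' i j hij) (hd2 i) hz hziX hzjX hx0 hid1
      rwa [P, show (-i + j : ZMod p) = j - i by ring] at h
    · have hid2 : x*(x*z) - (ρ ^ (-i).val + ρ ^ (-j).val) • (x*(z*x))
          + (ρ ^ (-i).val * ρ ^ (-j).val) • (z*(x*x)) = 0 :=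
        wt_two_comp_identity x z zi zj (ρ ^ i.val) (ρ ^ j.val) (ρ ^ (-i).val) (ρ ^ (-j).val)
          hziX hzjX (hd2 i) (hd2 j) hz
      have h := wt_key_commute z x xm xn (ρ ^ (-i).val) (ρ ^ (-j).val) (ρ ^ i.val)
        (pow_ne_zero _ hρ0) (fun hq => hij (neg_inj.mp (hinj _ _ hq))) (hd1 i)
        hx hxmZ hxnZ hz0 hid2
      rwa [P, show (i + -j : ZMod p) = -j - -i by ring] at h
  · subst h1; subst h2
    refine ⟨Set.pair_comm _ _, ?_, ?_⟩
    · have hid1 : z*(z*x) - (ρ ^ i.val + ρ ^ j.val) • (z*(x*z))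
          + (ρ ^ i.val * ρ ^ j.val) • (x*(z*z)) = 0 :=
        wt_two_comp_identity z x xn xm (ρ ^ (-i).val) (ρ ^ (-j).val) (ρ ^ i.val) (ρ ^ j.val)
          hxnZ hxmZ (hd1 i) (hd1 j) (by rw [hx, add_comm])
      have h := wt_key_commute x z zi zj (ρ ^ i.val) (ρ ^ j.val) (ρ ^ (-i).val)
        (pow_ne_zero _ hρ0) (hne' i j hij) (hd2 i) hz hziX hzjX hx0 hid1
      rwa [P, show (-i + j : ZMod p) = j - i by ring] at h
    · have hid2 : x*(x*z) - (ρ ^ (-j).val + ρ ^ (-i).val) • (x*(z*x))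
          + (ρ ^ (-j).val * ρ ^ (-i).val) • (z*(x*x)) = 0 :=
        wt_two_comp_identity x z zj zi (ρ ^ j.val) (ρ ^ i.val) (ρ ^ (-j).val) (ρ ^ (-i).val)
          hzjX hziX (hd2 j) (hd2 i) (by rw [hz, add_comm])
      have h := wt_key_commute z x xm xn (ρ ^ (-j).val) (ρ ^ (-i).val) (ρ ^ j.val)
        (pow_ne_zero _ hρ0) (fun hq => hij ((neg_inj.mp (hinj _ _ hq)).symm)) (hd1 j)
        hx hxmZ hxnZ hz0 hid2
      rwa [P, show (j + -i : ZMod p) = -i - -j by ring] at h
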